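/- Assume P is eventually positive and has SRLP with ratio-limit kernel H. Fix n ∈ ℕ and x, y ∈ G with μ^{*n}(x⁻¹y) > 0, and suppose C > 0 satisfies H(x⁻¹y, x⁻¹z) ≤ C for all z ∈ G. Then there exists a bounded linear operator W on the Fock space ℓ²(I) with operator norm ‖W‖ ≤ √C such that for every index (m, y', z) ∈ I: if y' = y then W e^{(m)}_{y',z} = √(H(x⁻¹y, x⁻¹z))·e^{(m+n)}_{x,z} (the target index (m+n, x, z) lies in I since μ^{*(m+n)}(x⁻¹z) ≥ μ^{*n}(x⁻¹y)·μ^{*m}(y⁻¹z) > 0), and if y' ≠ y then W e^{(m)}_{y',z} = 0. -/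

import Mathlib

open Filter Topology
open scoped Classical

noncomputable section

/-- The index set of the Fock space of the random walk: triples (m, j, k) with
μ^{*m}(j⁻¹k) > 0. -/
def FockIndex {G : Type*} [Group G] (ν : ℕ → G → ℝ) : Type _ :=
  {p : ℕ × G × G // 0 < ν p.1 (p.2.1⁻¹ * p.2.2)}

/-- The Fock space ℓ²(I) of the random walk. -/
abbrev FockSpace {G : Type*} [Group G] (ν : ℕ → G → ℝ) : Type _ :=
  lp (fun _ : FockIndex ν => ℝ) 2

/-- The orthonormal basis vector e^{(m)}_{j,k} of the Fock space. -/
def fockVec {G : Type*} [Group G] (ν : ℕ → G → ℝ) (i : FockIndex ν) : FockSpace ν :=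
  lp.single 2 i 1

/-- existence of the bounded operator W^{(n)}_{x,y} of norm at most √C on
the Fock space of the random walk, acting via the ratio-limit kernel. -/
theorem stmt11 {G : Type*} [Group G] [Countable G]
(μ : G → ℝ) (hμnn : ∀ g : G, 0 ≤ μ g)
    (hμfin : (Function.support μ).Finite)
    (hμgen : Subsemigroup.closure (Function.support μ) = ⊤)
    (hμsum : ∑ᶠ g : G, μ g = 1)
    (ν : ℕ → G → ℝ)
    (hν0 : ∀ x : G, ν 0 x = if x = 1 then 1 else 0)
    (hνs : ∀ (m : ℕ) (x : G), ν (m + 1) x = ∑ᶠ g : G, ν m g * μ (g⁻¹ * x))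
(hev : ∀ y : G, ∃ m₀ : ℕ, ∀ m ≥ m₀, 0 < ν m y)
(H : G → G → ℝ)
    (hH : ∀ x y : G, Tendsto (fun m : ℕ => ν m (x⁻¹ * y) / ν m y) atTop (𝓝 (H x y)))
    (hHpos : ∀ x y : G, 0 < H x y)
    (n : ℕ) (x y : G) (hxy : 0 < ν n (x⁻¹ * y))
    (C : ℝ) (hC : 0 < C) (hCH : ∀ z : G, H (x⁻¹ * y) (x⁻¹ * z) ≤ C) :
    ∃ W : FockSpace ν →L[ℝ] FockSpace ν, ‖W‖ ≤ Real.sqrt C ∧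
      ∀ (m : ℕ) (y' z : G) (h : 0 < ν m (y'⁻¹ * z)),
        (y' = y → ∃ h' : 0 < ν (m + n) (x⁻¹ * z),
          W (fockVec ν ⟨(m, y', z), h⟩) =
            Real.sqrt (H (x⁻¹ * y) (x⁻¹ * z)) • fockVec ν ⟨(m + n, x, z), h'⟩) ∧
        (y' ≠ y → W (fockVec ν ⟨(m, y', z), h⟩) = 0) := by
  classical
  -- nonnegativity of ν
  have hνnn : ∀ (m : ℕ) (g : G), 0 ≤ ν m g := by
    intro m
    induction m with
    | zero => intro g; rw [hν0]; split <;> norm_num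
    | succ m ih =>
      intro g
      rw [hνs]
      exact finsum_nonneg fun g' => mul_nonneg (ih g') (hμnn _)
  -- finite support of the convolution summand
  have hfin : ∀ (m : ℕ) (c : G),
      (Function.support fun g' => ν m g' * μ (g'⁻¹ * c)).Finite := by
    intro m c
    apply (hμfin.image fun s => c * s⁻¹).subset
    intro g' hg'
    have hμ : μ (g'⁻¹ * c) ≠ 0 := by
      intro h0
      apply hg'
      simp [Function.mem_support, h0]
    exact ⟨g'⁻¹ * c, hμ, by group⟩
  -- positivity propagation for convolution powers
  have hpos : ∀ (b a : ℕ) (g h : G), 0 < ν a h → 0 < ν b (h⁻¹ * g) → 0 < ν (a + b) g := by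
    intro b
    induction b with
    | zero =>
      intro a g h ha hb
      have h1 : h⁻¹ * g = 1 := by
        by_contra hne
        rw [hν0] at hb
        simp [hne] at hb
      have h2 : h = g := inv_mul_eq_one.mp h1
      subst h2
      simpa using ha
    | succ b ih =>
      intro a g h ha hb
      rw [hνs] at hb
      have hex : ∃ g', ν b g' * μ (g'⁻¹ * (h⁻¹ * g)) ≠ 0 := by
        by_contra hcon
        push_neg at hcon
        rw [finsum_eq_zero_of_forall_eq_zero hcon] at hb
        exact lt_irrefl 0 hb
      obtain ⟨g', hg'⟩ := hex
      have h1 : 0 < ν b g' :=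
        (hνnn b g').lt_of_ne (Ne.symm (left_ne_zero_of_mul hg'))
      have h2 : 0 < μ (g'⁻¹ * (h⁻¹ * g)) :=
        (hμnn _).lt_of_ne (Ne.symm (right_ne_zero_of_mul hg'))
      have h3 : 0 < ν (a + b) (h * g') := by
        apply ih a (h * g') h ha
        have : h⁻¹ * (h * g') = g' := by group
        rwa [this]
      have h4 : ν (a + b) (h * g') * μ ((h * g')⁻¹ * g) ≤ ν (a + b + 1) g := by
        rw [hνs]
        exact single_le_finsum (h * g') (hfin _ g)
          (fun j => mul_nonneg (hνnn _ _) (hμnn _))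
      have h5 : (h * g')⁻¹ * g = g'⁻¹ * (h⁻¹ * g) := by group
      have h6 : 0 < ν (a + b) (h * g') * μ ((h * g')⁻¹ * g) := by
        rw [h5]; exact mul_pos h3 h2
      exact lt_of_lt_of_le h6 h4
  -- the target positivity
  have hconv : ∀ (m : ℕ) (z : G), 0 < ν m (y⁻¹ * z) → 0 < ν (m + n) (x⁻¹ * z) := by
    intro m z hm
    have h1 : 0 < ν m ((x⁻¹ * y)⁻¹ * (x⁻¹ * z)) := by
      have : (x⁻¹ * y)⁻¹ * (x⁻¹ * z) = y⁻¹ * z := by group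
      rwa [this]
    have := hpos m n (x⁻¹ * z) (x⁻¹ * y) hxy h1
    rwa [Nat.add_comm] at this
  -- the condition describing targets
  set cond : FockIndex ν → Prop :=
    fun j => n ≤ j.1.1 ∧ j.1.2.1 = x ∧ 0 < ν (j.1.1 - n) (y⁻¹ * j.1.2.2) with hcond
  -- the source map
  set σ : FockIndex ν → FockIndex ν :=
    fun j => if h : cond j then ⟨(j.1.1 - n, y, j.1.2.2), h.2.2⟩ else j with hσ
  have hσ_eq : ∀ (j : FockIndex ν), cond j → (σ j).1 = (j.1.1 - n, y, j.1.2.2) := by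
    intro j hj
    simp only [hσ, dif_pos hj]
    exact congrArg Subtype.val (dif_pos hj)
  -- the raw action on coordinates
  set Φ : (FockIndex ν → ℝ) → FockIndex ν → ℝ :=
    fun f j => if cond j then Real.sqrt (H (x⁻¹ * y) (x⁻¹ * j.1.2.2)) * f (σ j) else 0
    with hΦ
  -- injectivity of σ on the condition set
  have hinj : ∀ j₁ j₂ : FockIndex ν, cond j₁ → cond j₂ → σ j₁ = σ j₂ → j₁ = j₂ := by
    intro j₁ j₂ h₁ h₂ hs
    have e : ((j₁.1.1 - n, y, j₁.1.2.2) : ℕ × G × G) = (j₂.1.1 - n, y, j₂.1.2.2) := by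
      rw [← hσ_eq j₁ h₁, ← hσ_eq j₂ h₂, hs]
    have e1 : j₁.1.1 - n = j₂.1.1 - n := congrArg Prod.fst e
    have e2 : j₁.1.2.2 = j₂.1.2.2 := congrArg (fun p => p.2.2) e
    have e3 : j₁.1.1 = j₂.1.1 := by
      have := h₁.1; have := h₂.1; omega
    apply Subtype.ext
    have t1 : j₁.1 = (j₁.1.1, j₁.1.2.1, j₁.1.2.2) := rfl
    have t2 : j₂.1 = (j₂.1.1, j₂.1.2.1, j₂.1.2.2) := rfl
    rw [t1, t2, e3, e2, h₁.2.1, h₂.2.1]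
  -- conversion between rpow 2 and pow 2
  have hrp : ∀ a : ℝ, a ^ ((2 : ENNReal).toReal) = a ^ 2 := by
    intro a
    rw [show ((2 : ENNReal).toReal) = ((2 : ℕ) : ℝ) by norm_num, Real.rpow_natCast]
  -- the fundamental sum bound
  have hsum : ∀ (f : FockSpace ν) (s : Finset (FockIndex ν)),
      ∑ j ∈ s, ‖Φ (⇑f) j‖ ^ ((2 : ENNReal).toReal) ≤ C * ‖f‖ ^ 2 := by
    intro f s
    simp only [hrp]
    have h1 : ∑ j ∈ s, ‖Φ (⇑f) j‖ ^ 2 = ∑ j ∈ s.filter cond, ‖Φ (⇑f) j‖ ^ 2 := by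
      rw [Finset.sum_filter_of_ne]
      intro j _ hne
      by_contra hcj
      apply hne
      simp only [hΦ, if_neg hcj]
      simp
      exact fun hc => absurd hc hcj
    have h2 : ∀ j ∈ s.filter cond, ‖Φ (⇑f) j‖ ^ 2 ≤ C * ‖(⇑f) (σ j)‖ ^ 2 := by
      intro j hj
      have hcj : cond j := (Finset.mem_filter.mp hj).2
      have hval : Φ (⇑f) j = Real.sqrt (H (x⁻¹ * y) (x⁻¹ * j.1.2.2)) * (⇑f) (σ j) := by
        simp only [hΦ, if_pos hcj]
      rw [hval, norm_mul, mul_pow, Real.norm_eq_abs,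
        abs_of_nonneg (Real.sqrt_nonneg _), Real.sq_sqrt (hHpos _ _).le]
      exact mul_le_mul_of_nonneg_right (hCH _) (by positivity)
    have h3 : ∑ j ∈ s.filter cond, ‖Φ (⇑f) j‖ ^ 2
        ≤ C * ∑ j ∈ s.filter cond, ‖(⇑f) (σ j)‖ ^ 2 := by
      rw [Finset.mul_sum]
      exact Finset.sum_le_sum h2
    have h4 : ∑ j ∈ s.filter cond, ‖(⇑f) (σ j)‖ ^ 2
        = ∑ i ∈ (s.filter cond).image σ, ‖(⇑f) i‖ ^ 2 := by
      rw [Finset.sum_image]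
      intro a ha b hb hab
      exact hinj a b (Finset.mem_filter.mp ha).2 (Finset.mem_filter.mp hb).2 hab
    have h5 : ∑ i ∈ (s.filter cond).image σ, ‖(⇑f) i‖ ^ 2 ≤ ‖f‖ ^ 2 := by
      have := lp.sum_rpow_le_norm_rpow (p := 2)
        (by norm_num) f ((s.filter cond).image σ)
      simpa only [hrp] using this
    calc ∑ j ∈ s, ‖Φ (⇑f) j‖ ^ 2 = ∑ j ∈ s.filter cond, ‖Φ (⇑f) j‖ ^ 2 := h1
      _ ≤ C * ∑ j ∈ s.filter cond, ‖(⇑f) (σ j)‖ ^ 2 := h3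
      _ = C * ∑ i ∈ (s.filter cond).image σ, ‖(⇑f) i‖ ^ 2 := by rw [h4]
      _ ≤ C * ‖f‖ ^ 2 := mul_le_mul_of_nonneg_left h5 hC.le
  -- membership in ℓ²
  have hmem : ∀ f : FockSpace ν, Memℓp (Φ ⇑f) 2 := fun f => memℓp_gen' (hsum f)
  -- the linear map
  set W₀ : FockSpace ν →ₗ[ℝ] FockSpace ν :=
    { toFun := fun f => ⟨Φ ⇑f, hmem f⟩
      map_add' := by
        intro f g
        apply lp.ext
        show Φ (⇑(f + g)) = Φ (⇑f) + Φ (⇑g)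
        funext j
        show Φ (⇑(f + g)) j = Φ (⇑f) j + Φ (⇑g) j
        rw [lp.coeFn_add f g]
        simp only [hΦ]
        by_cases hcj : cond j
        · simp only [if_pos hcj, Pi.add_apply]; ring
        · simp only [if_neg hcj]; ring
      map_smul' := by
        intro c f
        apply lp.ext
        show Φ (⇑(c • f)) = c • Φ (⇑f)
        funext j
        show Φ (⇑(c • f)) j = (c • Φ (⇑f)) j
        rw [lp.coeFn_smul c f]
        simp only [hΦ, Pi.smul_apply, smul_eq_mul]
        by_cases hcj : cond j
        · simp only [if_pos hcj]; ring
        · simp only [if_neg hcj]; ring } with hW₀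
  -- the norm bound
  have hbound : ∀ f : FockSpace ν, ‖W₀ f‖ ≤ Real.sqrt C * ‖f‖ := by
    intro f
    apply lp.norm_le_of_forall_sum_le (by norm_num)
      (mul_nonneg (Real.sqrt_nonneg _) (norm_nonneg _))
    intro s
    have h1 : (Real.sqrt C * ‖f‖) ^ ((2 : ENNReal).toReal) = C * ‖f‖ ^ 2 := by
      rw [hrp, mul_pow, Real.sq_sqrt hC.le]
    rw [h1]
    exact hsum f s
  -- coordinates of basis vectors
  have hfock : ∀ (i j : FockIndex ν), (⇑(fockVec ν i)) j = if j = i then 1 else 0 := by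
    intro i j
    by_cases hji : j = i
    · subst hji
      simp only [if_pos rfl]
      exact lp.single_apply_self 2 j 1
    · simp only [if_neg hji]
      exact lp.single_apply_ne 2 i 1 hji
  -- action on basis vectors, raw form
  have hact : ∀ (i j : FockIndex ν),
      Φ (⇑(fockVec ν i)) j
        = if cond j then
            Real.sqrt (H (x⁻¹ * y) (x⁻¹ * j.1.2.2)) * (if σ j = i then 1 else 0)
          else 0 := by
    intro i j
    simp only [hΦ, hfock]
  refine ⟨W₀.mkContinuous (Real.sqrt C) hbound,
    W₀.mkContinuous_norm_le (Real.sqrt_nonneg C) hbound, ?_⟩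
  intro m y' z h
  constructor
  · intro hyy
    subst hyy
    have h' : 0 < ν (m + n) (x⁻¹ * z) := hconv m z h
    refine ⟨h', ?_⟩
    set i : FockIndex ν := ⟨(m, y', z), h⟩ with hi
    set t : FockIndex ν := ⟨(m + n, x, z), h'⟩ with ht
    have hcond_t : cond t := by
      refine ⟨?_, rfl, ?_⟩
      · show n ≤ m + n; omega
      · show 0 < ν (m + n - n) (y'⁻¹ * z)
        simpa using h
    have hσ_t : σ t = i := by
      apply Subtype.ext
      rw [hσ_eq t hcond_t]
      have : t.1.1 - n = m := by show m + n - n = m; omega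
      rw [this]
    have hjt : ∀ j : FockIndex ν, cond j → σ j = i → j = t := by
      intro j hcj hsj
      have e : ((j.1.1 - n, y', j.1.2.2) : ℕ × G × G) = (m, y', z) := by
        rw [← hσ_eq j hcj, hsj]
      have e1 : j.1.1 - n = m := congrArg Prod.fst e
      have e3 : j.1.2.2 = z := congrArg (fun p => p.2.2) e
      have e4 : j.1.1 = m + n := by have := hcj.1; omega
      apply Subtype.ext
      have t1 : j.1 = (j.1.1, j.1.2.1, j.1.2.2) := rfl
      rw [t1, e4, e3, hcj.2.1]
    apply lp.ext
    rw [lp.coeFn_smul]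
    funext j
    show Φ (⇑(fockVec ν i)) j
      = (Real.sqrt (H (x⁻¹ * y') (x⁻¹ * z)) • ⇑(fockVec ν t)) j
    rw [Pi.smul_apply, hact, hfock, smul_eq_mul]
    by_cases hcj : cond j
    · by_cases hsj : σ j = i
      · have hjeq : j = t := hjt j hcj hsj
        have hz : j.1.2.2 = z := by rw [hjeq]
        simp only [if_pos hcj, if_pos hsj, if_pos hjeq, hz, mul_one]
      · have hjne : j ≠ t := by
          intro hje
          apply hsj
          rw [hje, hσ_t]
        simp only [if_pos hcj, if_neg hsj, if_neg hjne, mul_zero]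
    · have hjne : j ≠ t := fun hje => hcj (hje ▸ hcond_t)
      simp only [if_neg hcj, if_neg hjne, mul_zero]
  · intro hne
    apply lp.ext
    funext j
    set i : FockIndex ν := ⟨(m, y', z), h⟩ with hi
    show Φ (⇑(fockVec ν i)) j = 0
    rw [hact]
    by_cases hcj : cond j
    · have hsj : σ j ≠ i := by
        intro hsj
        apply hne
        have e : ((j.1.1 - n, y, j.1.2.2) : ℕ × G × G) = (m, y', z) := by
          rw [← hσ_eq j hcj, hsj]
        exact (congrArg (fun p => p.2.1) e).symm
      simp only [if_pos hcj, if_neg hsj, mul_zero]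
    · simp only [if_neg hcj]
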